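/- If i ↝_{L'} i' (pruning of interaction i w.r.t. lifelines L' yields i'), then ρ(i') equals exactly the set of traces t in ρ(i) such that for all lifelines l ∈ L', t contains no action on l. -/
import Mathlib


/-- Conflict predicate: trace `t` contains an action occurring on lifeline `l`. -/
def conflict {A L : Type} (theta : A → L) : List A → L → Prop
  | [], _ => False
  | a :: t, l => theta a = l ∨ conflict theta t l

/-- Conditional conflict predicate: trace `t` contains an action on lifeline `l` with `l ∉ r`. -/
def condConflict {A L : Type} (theta : A → L) (r : Set L) : List A → L → Prop
  | [], _ => False
  | a :: t, l => (theta a = l ∧ l ∉ r) ∨ condConflict theta r t l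

/-- Conditional sequencing: `CondSeq theta r t1 t2 t` means `t ∈ t1 ⫽_r t2`. -/
inductive CondSeq {A L : Type} (theta : A → L) (r : Set L) :
    List A → List A → List A → Prop
  | nil_left (t2 : List A) : CondSeq theta r [] t2 t2
  | nil_right (t1 : List A) : CondSeq theta r t1 [] t1
  | left {a1 a2 : A} {t1 t2 t : List A} :
      CondSeq theta r t1 (a2 :: t2) t →
      CondSeq theta r (a1 :: t1) (a2 :: t2) (a1 :: t)
  | right {a1 a2 : A} {t1 t2 t : List A} :
      CondSeq theta r (a1 :: t1) t2 t →
      ¬ condConflict theta r (a1 :: t1) (theta a2) →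
      CondSeq theta r (a1 :: t1) (a2 :: t2) (a2 :: t)

/-- Interaction terms. -/
inductive Interaction (A L : Type) where
  | empty : Interaction A L
  | act : A → Interaction A L
  | alt : Interaction A L → Interaction A L → Interaction A L
  | strict : Interaction A L → Interaction A L → Interaction A L
  | coreg : Set L → Interaction A L → Interaction A L → Interaction A L
  | loopS : Interaction A L → Interaction A L
  | loopC : Set L → Interaction A L → Interaction A L

/-- Concatenation (strict sequencing) of sets of traces. -/
def concatSet {A : Type} (S1 S2 : Set (List A)) : Set (List A) :=
  {t | ∃ u ∈ S1, ∃ v ∈ S2, t = u ++ v}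

/-- Conditional sequencing of sets of traces. -/
def condSeqSet {A L : Type} (theta : A → L) (r : Set L) (S1 S2 : Set (List A)) :
    Set (List A) :=
  {t | ∃ u ∈ S1, ∃ v ∈ S2, CondSeq theta r u v t}

/-- `j`-th power of a trace set under a binary scheduling operator. -/
def powOp {A : Type} (op : Set (List A) → Set (List A) → Set (List A))
    (S : Set (List A)) : ℕ → Set (List A)
  | 0 => {([] : List A)}
  | n + 1 => op S (powOp op S n)

/-- Kleene closure of a trace set under a binary scheduling operator. -/
def kleene {A : Type} (op : Set (List A) → Set (List A) → Set (List A))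
    (S : Set (List A)) : Set (List A) :=
  ⋃ n : ℕ, powOp op S n

/-- Denotational semantics of interactions (sets of global traces). -/
def rho {A L : Type} (theta : A → L) : Interaction A L → Set (List A)
  | .empty => {([] : List A)}
  | .act a => {[a]}
  | .alt i1 i2 => rho theta i1 ∪ rho theta i2
  | .strict i1 i2 => concatSet (rho theta i1) (rho theta i2)
  | .coreg r i1 i2 => condSeqSet theta r (rho theta i1) (rho theta i2)
  | .loopS i1 => kleene concatSet (rho theta i1)
  | .loopC r i1 => kleene (condSeqSet theta r) (rho theta i1)

/-- `CannotPrune theta L' i` : all behaviors of `i` involve an action on a lifeline of `L'`. -/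
inductive CannotPrune {A L : Type} (theta : A → L) (L' : Set L) : Interaction A L → Prop
  | act {a : A} : theta a ∈ L' → CannotPrune theta L' (.act a)
  | alt {i1 i2 : Interaction A L} :
      CannotPrune theta L' i1 → CannotPrune theta L' i2 → CannotPrune theta L' (.alt i1 i2)
  | strict_left {i1 i2 : Interaction A L} :
      CannotPrune theta L' i1 → CannotPrune theta L' (.strict i1 i2)
  | strict_right {i1 i2 : Interaction A L} :
      CannotPrune theta L' i2 → CannotPrune theta L' (.strict i1 i2)
  | coreg_left {r : Set L} {i1 i2 : Interaction A L} :
      CannotPrune theta L' i1 → CannotPrune theta L' (.coreg r i1 i2)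
  | coreg_right {r : Set L} {i1 i2 : Interaction A L} :
      CannotPrune theta L' i2 → CannotPrune theta L' (.coreg r i1 i2)

/-- Pruning relation: `Prunes theta L' i i'` means `i ↝_{L'} i'`. -/
inductive Prunes {A L : Type} (theta : A → L) (L' : Set L) :
    Interaction A L → Interaction A L → Prop
  | empty : Prunes theta L' .empty .empty
  | act {a : A} : theta a ∉ L' → Prunes theta L' (.act a) (.act a)
  | alt_both {i1 i2 i1' i2' : Interaction A L} :
      Prunes theta L' i1 i1' → Prunes theta L' i2 i2' →
      Prunes theta L' (.alt i1 i2) (.alt i1' i2')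
  | alt_left {i1 i2 i1' : Interaction A L} :
      Prunes theta L' i1 i1' → CannotPrune theta L' i2 →
      Prunes theta L' (.alt i1 i2) i1'
  | alt_right {i1 i2 i2' : Interaction A L} :
      Prunes theta L' i2 i2' → CannotPrune theta L' i1 →
      Prunes theta L' (.alt i1 i2) i2'
  | strict {i1 i2 i1' i2' : Interaction A L} :
      Prunes theta L' i1 i1' → Prunes theta L' i2 i2' →
      Prunes theta L' (.strict i1 i2) (.strict i1' i2')
  | coreg {r : Set L} {i1 i2 i1' i2' : Interaction A L} :
      Prunes theta L' i1 i1' → Prunes theta L' i2 i2' →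
      Prunes theta L' (.coreg r i1 i2) (.coreg r i1' i2')
  | loopS {i1 i1' : Interaction A L} :
      Prunes theta L' i1 i1' → Prunes theta L' (.loopS i1) (.loopS i1')
  | loopS_elim {i1 : Interaction A L} :
      CannotPrune theta L' i1 → Prunes theta L' (.loopS i1) .empty
  | loopC {r : Set L} {i1 i1' : Interaction A L} :
      Prunes theta L' i1 i1' → Prunes theta L' (.loopC r i1) (.loopC r i1')
  | loopC_elim {r : Set L} {i1 : Interaction A L} :
      CannotPrune theta L' i1 → Prunes theta L' (.loopC r i1) .empty

section Aux

variable {A L : Type}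

/-- A trace has no conflict with any lifeline in `L'`. -/
def NoConf (theta : A → L) (L' : Set L) (t : List A) : Prop :=
  ∀ l ∈ L', ¬ conflict theta t l

lemma conflict_iff_mem (theta : A → L) (t : List A) (l : L) :
    conflict theta t l ↔ ∃ a ∈ t, theta a = l := by
  induction t with
  | nil => simp [conflict]
  | cons a t ih => simp [conflict, ih]

lemma conflict_append (theta : A → L) (u v : List A) (l : L) :
    conflict theta (u ++ v) l ↔ conflict theta u l ∨ conflict theta v l := by
  simp [conflict_iff_mem, List.mem_append, or_and_right, exists_or]

lemma mem_condSeq {theta : A → L} {r : Set L} {u v t : List A}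
    (h : CondSeq theta r u v t) (a : A) : a ∈ t ↔ a ∈ u ∨ a ∈ v := by
  induction h with
  | nil_left t2 => simp
  | nil_right t1 => simp
  | left _ ih => simp only [List.mem_cons, ih]; tauto
  | right _ _ ih => simp only [List.mem_cons, ih]; tauto

lemma conflict_condSeq {theta : A → L} {r : Set L} {u v t : List A}
    (h : CondSeq theta r u v t) (l : L) :
    conflict theta t l ↔ conflict theta u l ∨ conflict theta v l := by
  simp only [conflict_iff_mem]
  constructor
  · rintro ⟨a, ha, rfl⟩
    rcases (mem_condSeq h a).1 ha with h' | h'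
    · exact Or.inl ⟨a, h', rfl⟩
    · exact Or.inr ⟨a, h', rfl⟩
  · rintro (⟨a, ha, rfl⟩ | ⟨a, ha, rfl⟩) <;>
      exact ⟨a, (mem_condSeq h a).2 (by tauto), rfl⟩

lemma noConf_nil (theta : A → L) (L' : Set L) : NoConf theta L' [] := by
  intro l _ h; exact h

lemma noConf_append {theta : A → L} {L' : Set L} (u v : List A) :
    NoConf theta L' (u ++ v) ↔ NoConf theta L' u ∧ NoConf theta L' v := by
  simp only [NoConf, conflict_append, not_or, forall_and]

lemma noConf_condSeq {theta : A → L} {L' : Set L} {r : Set L} {u v t : List A}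
    (h : CondSeq theta r u v t) :
    NoConf theta L' t ↔ NoConf theta L' u ∧ NoConf theta L' v := by
  simp only [NoConf, conflict_condSeq h, not_or, forall_and]

lemma cannotPrune_conflict {theta : A → L} {L' : Set L} {i : Interaction A L}
    (h : CannotPrune theta L' i) :
    ∀ t ∈ rho theta i, ∃ l ∈ L', conflict theta t l := by
  induction h with
  | @act a ha =>
      intro t ht
      rcases ht with rfl
      exact ⟨theta a, ha, Or.inl rfl⟩
  | alt _ _ ih1 ih2 =>
      intro t ht
      rcases ht with ht | ht
      · exact ih1 t ht
      · exact ih2 t ht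
  | strict_left _ ih =>
      rintro t ⟨u, hu, v, _, rfl⟩
      obtain ⟨l, hl, hc⟩ := ih u hu
      exact ⟨l, hl, (conflict_append _ _ _ _).2 (Or.inl hc)⟩
  | strict_right _ ih =>
      rintro t ⟨u, _, v, hv, rfl⟩
      obtain ⟨l, hl, hc⟩ := ih v hv
      exact ⟨l, hl, (conflict_append _ _ _ _).2 (Or.inr hc)⟩
  | coreg_left _ ih =>
      rintro t ⟨u, hu, v, _, hc⟩
      obtain ⟨l, hl, hcc⟩ := ih u hu
      exact ⟨l, hl, (conflict_condSeq hc l).2 (Or.inl hcc)⟩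
  | coreg_right _ ih =>
      rintro t ⟨u, _, v, hv, hc⟩
      obtain ⟨l, hl, hcc⟩ := ih v hv
      exact ⟨l, hl, (conflict_condSeq hc l).2 (Or.inr hcc)⟩

lemma powOp_concat_sep (theta : A → L) (L' : Set L) (S : Set (List A)) (n : ℕ) :
    powOp concatSet {t ∈ S | NoConf theta L' t} n
      = {t ∈ powOp concatSet S n | NoConf theta L' t} := by
  induction n with
  | zero =>
      ext t
      simp only [powOp, Set.mem_singleton_iff, Set.mem_sep_iff]
      constructor
      · rintro rfl; exact ⟨rfl, noConf_nil theta L'⟩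
      · rintro ⟨rfl, _⟩; rfl
  | succ n ih =>
      ext t
      simp only [powOp, ih, concatSet, Set.mem_setOf_eq, Set.mem_sep_iff]
      constructor
      · rintro ⟨u, ⟨hu, hup⟩, v, ⟨hv, hvp⟩, rfl⟩
        exact ⟨⟨u, hu, v, hv, rfl⟩, (noConf_append u v).2 ⟨hup, hvp⟩⟩
      · rintro ⟨⟨u, hu, v, hv, rfl⟩, hp⟩
        obtain ⟨h1, h2⟩ := (noConf_append u v).1 hp
        exact ⟨u, ⟨hu, h1⟩, v, ⟨hv, h2⟩, rfl⟩

lemma powOp_condSeq_sep (theta : A → L) (L' : Set L) (r : Set L)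
    (S : Set (List A)) (n : ℕ) :
    powOp (condSeqSet theta r) {t ∈ S | NoConf theta L' t} n
      = {t ∈ powOp (condSeqSet theta r) S n | NoConf theta L' t} := by
  induction n with
  | zero =>
      ext t
      simp only [powOp, Set.mem_singleton_iff, Set.mem_sep_iff]
      constructor
      · rintro rfl; exact ⟨rfl, noConf_nil theta L'⟩
      · rintro ⟨rfl, _⟩; rfl
  | succ n ih =>
      ext t
      simp only [powOp, ih, condSeqSet, Set.mem_setOf_eq, Set.mem_sep_iff]
      constructor
      · rintro ⟨u, ⟨hu, hup⟩, v, ⟨hv, hvp⟩, hc⟩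
        exact ⟨⟨u, hu, v, hv, hc⟩, (noConf_condSeq hc).2 ⟨hup, hvp⟩⟩
      · rintro ⟨⟨u, hu, v, hv, hc⟩, hp⟩
        obtain ⟨h1, h2⟩ := (noConf_condSeq hc).1 hp
        exact ⟨u, ⟨hu, h1⟩, v, ⟨hv, h2⟩, hc⟩

end Aux

/-- Pruning characterization: the semantics of the pruned interaction is exactly the
set of traces of the original with no action on any lifeline of `L'`. -/
theorem prune_characterisation {A L : Type} (theta : A → L)
    (L' : Set L) (i i' : Interaction A L) (h : Prunes theta L' i i') :
    rho theta i' = {t ∈ rho theta i | ∀ l ∈ L', ¬ conflict theta t l} := by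
  show rho theta i' = {t ∈ rho theta i | NoConf theta L' t}
  induction h with
  | empty =>
      ext t
      simp only [rho, Set.mem_singleton_iff, Set.mem_sep_iff]
      constructor
      · rintro rfl; exact ⟨rfl, noConf_nil theta L'⟩
      · rintro ⟨rfl, _⟩; rfl
  | @act a ha =>
      ext t
      simp only [rho, Set.mem_singleton_iff, Set.mem_sep_iff]
      constructor
      · rintro rfl
        refine ⟨rfl, fun l hl hc => ?_⟩
        rcases hc with h | h
        · exact ha (h ▸ hl)
        · exact h
      · rintro ⟨rfl, _⟩; rfl
  | alt_both _ _ ih1 ih2 =>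
      ext t
      simp only [rho, ih1, ih2, Set.mem_union, Set.mem_sep_iff, Set.mem_setOf_eq]
      tauto
  | alt_left _ hcp ih =>
      ext t
      simp only [rho, ih, Set.mem_union, Set.mem_sep_iff]
      constructor
      · rintro ⟨ht, hp⟩; exact ⟨Or.inl ht, hp⟩
      · rintro ⟨ht | ht, hp⟩
        · exact ⟨ht, hp⟩
        · obtain ⟨l, hl, hc⟩ := cannotPrune_conflict hcp t ht
          exact absurd hc (hp l hl)
  | alt_right _ hcp ih =>
      ext t
      simp only [rho, ih, Set.mem_union, Set.mem_sep_iff]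
      constructor
      · rintro ⟨ht, hp⟩; exact ⟨Or.inr ht, hp⟩
      · rintro ⟨ht | ht, hp⟩
        · obtain ⟨l, hl, hc⟩ := cannotPrune_conflict hcp t ht
          exact absurd hc (hp l hl)
        · exact ⟨ht, hp⟩
  | strict _ _ ih1 ih2 =>
      ext t
      simp only [rho, ih1, ih2, concatSet, Set.mem_setOf_eq, Set.mem_sep_iff]
      constructor
      · rintro ⟨u, ⟨hu, hup⟩, v, ⟨hv, hvp⟩, rfl⟩
        exact ⟨⟨u, hu, v, hv, rfl⟩, (noConf_append u v).2 ⟨hup, hvp⟩⟩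
      · rintro ⟨⟨u, hu, v, hv, rfl⟩, hp⟩
        obtain ⟨h1, h2⟩ := (noConf_append u v).1 hp
        exact ⟨u, ⟨hu, h1⟩, v, ⟨hv, h2⟩, rfl⟩
  | coreg _ _ ih1 ih2 =>
      ext t
      simp only [rho, ih1, ih2, condSeqSet, Set.mem_setOf_eq, Set.mem_sep_iff]
      constructor
      · rintro ⟨u, ⟨hu, hup⟩, v, ⟨hv, hvp⟩, hc⟩
        exact ⟨⟨u, hu, v, hv, hc⟩, (noConf_condSeq hc).2 ⟨hup, hvp⟩⟩
      · rintro ⟨⟨u, hu, v, hv, hc⟩, hp⟩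
        obtain ⟨h1, h2⟩ := (noConf_condSeq hc).1 hp
        exact ⟨u, ⟨hu, h1⟩, v, ⟨hv, h2⟩, hc⟩
  | loopS _ ih =>
      ext t
      simp only [rho, ih, kleene, Set.mem_iUnion, Set.mem_sep_iff,
        powOp_concat_sep, Set.mem_setOf_eq]
      constructor
      · rintro ⟨n, ht, hp⟩; exact ⟨⟨n, ht⟩, hp⟩
      · rintro ⟨⟨n, ht⟩, hp⟩; exact ⟨n, ht, hp⟩
  | loopC _ ih =>
      ext t
      simp only [rho, ih, kleene, Set.mem_iUnion, Set.mem_sep_iff,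
        powOp_condSeq_sep, Set.mem_setOf_eq]
      constructor
      · rintro ⟨n, ht, hp⟩; exact ⟨⟨n, ht⟩, hp⟩
      · rintro ⟨⟨n, ht⟩, hp⟩; exact ⟨n, ht, hp⟩
  | loopS_elim hcp =>
      ext t
      simp only [rho, Set.mem_singleton_iff, kleene, Set.mem_iUnion, Set.mem_sep_iff]
      constructor
      · rintro rfl
        exact ⟨⟨0, rfl⟩, noConf_nil theta L'⟩
      · rintro ⟨⟨n, hn⟩, hp⟩
        cases n with
        | zero => exact hn
        | succ n =>
          obtain ⟨u, hu, v, hv, rfl⟩ := hn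
          obtain ⟨l, hl, hc⟩ := cannotPrune_conflict hcp u hu
          exact absurd ((conflict_append theta u v l).2 (Or.inl hc)) (hp l hl)
  | loopC_elim hcp =>
      ext t
      simp only [rho, Set.mem_singleton_iff, kleene, Set.mem_iUnion, Set.mem_sep_iff]
      constructor
      · rintro rfl
        exact ⟨⟨0, rfl⟩, noConf_nil theta L'⟩
      · rintro ⟨⟨n, hn⟩, hp⟩
        cases n with
        | zero => exact hn
        | succ n =>
          obtain ⟨u, hu, v, hv, hc⟩ := hn
          obtain ⟨l, hl, hcc⟩ := cannotPrune_conflict hcp u hu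
          exact absurd ((conflict_condSeq hc l).2 (Or.inl hcc)) (hp l hl)
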